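/- Fix n ≥ 2. Let X be any set of problem instances and suppose that for each x ∈ X there is a real-valued function s_x on the set of pseudoknot-free foldings of length n, and for each ρ ∈ [0,1] a value u_ρ(x) ∈ ℝ, with the property that ρ ↦ u_ρ(x) is constant on every subset of [0,1] on which the set of maximizers argmax_φ (ρ·|φ| + (1 − ρ)·s_x(φ)) is constant. Then every set of instances pseudo-shattered by U = {u_ρ : ρ ∈ [0,1]} has size N satisfying 2^N ≤ n²·N + 1; in particular pdim(U) = O(ln n). -/

import Mathlib

/-- A pseudoknot-free folding of length `n`: a set of pairs `(i, j)` with `1 ≤ i < j ≤ n`,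
every index occurring in at most one pair, and no crossing pairs. -/
def IsFolding (n : ℕ) (φ : Finset (ℕ × ℕ)) : Prop :=
  (∀ p ∈ φ, 1 ≤ p.1 ∧ p.1 < p.2 ∧ p.2 ≤ n) ∧
  (∀ p ∈ φ, ∀ q ∈ φ, p ≠ q → p.1 ≠ q.1 ∧ p.1 ≠ q.2 ∧ p.2 ≠ q.1 ∧ p.2 ≠ q.2) ∧
  (∀ p ∈ φ, ∀ q ∈ φ, ¬ (p.1 < q.1 ∧ q.1 < p.2 ∧ p.2 < q.2))

/-- The type of pseudoknot-free foldings of length `n`. -/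
def Fold (n : ℕ) := {φ : Finset (ℕ × ℕ) // IsFolding n φ}

/-- The parameterized objective `V_ρ(φ) = ρ·|φ| + (1 − ρ)·s(φ)`. -/
noncomputable def Vval {n : ℕ} (s : Fold n → ℝ) (ρ : ℝ) (φ : Fold n) : ℝ :=
  ρ * (φ.1.card : ℝ) + (1 - ρ) * s φ


lemma fold_card_le {n : ℕ} (φ : Fold n) : φ.1.card ≤ n - 1 := by
  obtain ⟨φ, h1, h2, h3⟩ := φ
  have hinj : Set.InjOn Prod.fst (φ : Set (ℕ × ℕ)) := by
    intro p hp q hq hpq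
    by_contra hne
    exact ((h2 p hp q hq hne).1) hpq
  have hsub : Finset.image Prod.fst φ ⊆ Finset.Icc 1 (n-1) := by
    intro i hi
    simp only [Finset.mem_image] at hi
    obtain ⟨p, hp, rfl⟩ := hi
    have := h1 p hp
    simp only [Finset.mem_Icc]
    omega
  calc φ.card = (Finset.image Prod.fst φ).card := (Finset.card_image_of_injOn hinj).symm
    _ ≤ (Finset.Icc 1 (n-1)).card := Finset.card_le_card hsub
    _ = n - 1 := by rw [Nat.card_Icc]; omega

instance foldFinite (n : ℕ) : Finite (Fold n) := by
  have hfin : {φ : Finset (ℕ × ℕ) | IsFolding n φ}.Finite := by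
    apply Set.Finite.subset (Finset.finite_toSet ((Finset.Icc 1 n ×ˢ Finset.Icc 1 n).powerset))
    intro φ hφ
    simp only [Finset.coe_powerset, Set.mem_preimage, Set.mem_powerset_iff, Finset.coe_subset,
      Finset.mem_coe, Finset.mem_powerset]
    intro p hp
    have := hφ.1 p hp
    simp only [Finset.mem_product, Finset.mem_Icc]
    omega
  exact hfin.to_subtype

instance foldNonempty (n : ℕ) : Nonempty (Fold n) :=
  ⟨⟨∅, by refine ⟨?_, ?_, ?_⟩ <;> simp⟩⟩

def MaxSet {n : ℕ} (f : Fold n → ℝ) (ρ : ℝ) : Set (Fold n) :=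
  {φ | ∀ φ', Vval f ρ φ' ≤ Vval f ρ φ}

def cardSet {n : ℕ} (f : Fold n → ℝ) (ρ : ℝ) : Set ℕ :=
  (fun φ : Fold n => φ.1.card) '' MaxSet f ρ

noncomputable def hFn {n : ℕ} (f : Fold n → ℝ) (ρ : ℝ) : ℕ :=
  sInf (cardSet f ρ) + sSup (cardSet f ρ)

lemma maxSet_nonempty {n : ℕ} (f : Fold n → ℝ) (ρ : ℝ) : (MaxSet f ρ).Nonempty := by
  obtain ⟨φ, hφ⟩ := Finite.exists_max (Vval f ρ)
  exact ⟨φ, hφ⟩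

lemma cardSet_nonempty {n : ℕ} (f : Fold n → ℝ) (ρ : ℝ) : (cardSet f ρ).Nonempty :=
  (maxSet_nonempty f ρ).image _

lemma cardSet_bddAbove {n : ℕ} (f : Fold n → ℝ) (ρ : ℝ) : BddAbove (cardSet f ρ) := by
  refine ⟨n - 1, ?_⟩
  rintro k ⟨φ, -, rfl⟩
  exact fold_card_le φ

lemma claimA {n : ℕ} (f : Fold n → ℝ) {ρ₁ ρ₂ : ℝ} (h0 : 0 ≤ ρ₁) (h12 : ρ₁ < ρ₂) (h1 : ρ₂ ≤ 1)
    {φ ψ : Fold n} (hφ : φ ∈ MaxSet f ρ₁) (hψ : ψ ∈ MaxSet f ρ₂) :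
    φ.1.card ≤ ψ.1.card := by
  by_contra hc
  push_neg at hc
  have e1 := hφ ψ
  have e2 := hψ φ
  simp only [Vval] at e1 e2
  have hcast : (ψ.1.card : ℝ) < (φ.1.card : ℝ) := by exact_mod_cast hc
  nlinarith [mul_nonneg (by linarith : (0:ℝ) ≤ 1 - ρ₁) (by linarith : (0:ℝ) ≤ Vval f ρ₂ ψ - Vval f ρ₂ ψ),
    mul_nonneg (by linarith : (0:ℝ) ≤ 1 - ρ₁) (sub_nonneg.mpr e2),
    mul_nonneg (by linarith : (0:ℝ) ≤ 1 - ρ₂) (sub_nonneg.mpr e1),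
    mul_pos (sub_pos.mpr h12) (sub_pos.mpr hcast)]

lemma sSup_le_sInf_across {n : ℕ} (f : Fold n → ℝ) {ρ₁ ρ₂ : ℝ} (h0 : 0 ≤ ρ₁) (h12 : ρ₁ < ρ₂)
    (h1 : ρ₂ ≤ 1) : sSup (cardSet f ρ₁) ≤ sInf (cardSet f ρ₂) := by
  obtain ⟨φ, hφ, hφc⟩ := Nat.sSup_mem (cardSet_nonempty f ρ₁) (cardSet_bddAbove f ρ₁)
  obtain ⟨ψ, hψ, hψc⟩ := Nat.sInf_mem (cardSet_nonempty f ρ₂)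
  rw [← hφc, ← hψc]
  exact claimA f h0 h12 h1 hφ hψ

lemma sInf_le_sSup_self {n : ℕ} (f : Fold n → ℝ) (ρ : ℝ) :
    sInf (cardSet f ρ) ≤ sSup (cardSet f ρ) :=
  Nat.sInf_le (Nat.sSup_mem (cardSet_nonempty f ρ) (cardSet_bddAbove f ρ))

lemma hFn_mono {n : ℕ} (f : Fold n → ℝ) {ρ₁ ρ₂ : ℝ} (h0 : 0 ≤ ρ₁) (h12 : ρ₁ ≤ ρ₂)
    (h1 : ρ₂ ≤ 1) : hFn f ρ₁ ≤ hFn f ρ₂ := by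
  rcases eq_or_lt_of_le h12 with rfl | hlt
  · exact le_rfl
  · have h := sSup_le_sInf_across f h0 hlt h1
    have h2 := sInf_le_sSup_self f ρ₁
    have h3 := sInf_le_sSup_self f ρ₂
    unfold hFn
    omega

lemma hFn_le {n : ℕ} (f : Fold n → ℝ) (ρ : ℝ) : hFn f ρ ≤ 2 * (n - 1) := by
  have h1 : sSup (cardSet f ρ) ≤ n - 1 := by
    obtain ⟨φ, hφ, hφc⟩ := Nat.sSup_mem (cardSet_nonempty f ρ) (cardSet_bddAbove f ρ)
    rw [← hφc]; exact fold_card_le φ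
  have h2 := sInf_le_sSup_self f ρ
  unfold hFn
  omega

lemma hFn_strict {n : ℕ} (f : Fold n → ℝ) {ρ₁ ρ₂ : ℝ} (h0 : 0 ≤ ρ₁) (h12 : ρ₁ < ρ₂)
    (h1 : ρ₂ < 1) (hne : MaxSet f ρ₁ ≠ MaxSet f ρ₂) : hFn f ρ₁ < hFn f ρ₂ := by
  have hM1m2 := sSup_le_sInf_across f h0 h12 (le_of_lt h1)
  have hm1M1 := sInf_le_sSup_self f ρ₁
  have hm2M2 := sInf_le_sSup_self f ρ₂
  by_contra hle
  push_neg at hle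
  unfold hFn at hle
  -- all four quantities are equal to k
  have hk1 : sInf (cardSet f ρ₁) = sSup (cardSet f ρ₁) := by omega
  have hk2 : sSup (cardSet f ρ₁) = sInf (cardSet f ρ₂) := by omega
  have hk3 : sInf (cardSet f ρ₂) = sSup (cardSet f ρ₂) := by omega
  set k := sInf (cardSet f ρ₁) with hkdef
  have hall1 : ∀ φ ∈ MaxSet f ρ₁, φ.1.card = k := by
    intro φ hφ
    have hlo : k ≤ φ.1.card := Nat.sInf_le ⟨φ, hφ, rfl⟩
    have hhi : φ.1.card ≤ sSup (cardSet f ρ₁) :=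
      le_csSup (cardSet_bddAbove f ρ₁) ⟨φ, hφ, rfl⟩
    omega
  have hall2 : ∀ φ ∈ MaxSet f ρ₂, φ.1.card = k := by
    intro φ hφ
    have hlo : sInf (cardSet f ρ₂) ≤ φ.1.card := Nat.sInf_le ⟨φ, hφ, rfl⟩
    have hhi : φ.1.card ≤ sSup (cardSet f ρ₂) :=
      le_csSup (cardSet_bddAbove f ρ₂) ⟨φ, hφ, rfl⟩
    omega
  apply hne
  obtain ⟨φ₀, hφ₀⟩ := maxSet_nonempty f ρ₁
  obtain ⟨ψ₀, hψ₀⟩ := maxSet_nonempty f ρ₂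
  have hρ₁1 : ρ₁ < 1 := lt_trans h12 h1
  ext χ
  constructor
  · intro hχ
    have hcχ : (χ.1.card : ℝ) = (k : ℝ) := by exact_mod_cast hall1 χ hχ
    have hcψ : (ψ₀.1.card : ℝ) = (k : ℝ) := by exact_mod_cast hall2 ψ₀ hψ₀
    have e1 := hχ ψ₀
    simp only [Vval] at e1
    have hs : f ψ₀ ≤ f χ := by nlinarith [e1]
    intro φ'
    calc Vval f ρ₂ φ' ≤ Vval f ρ₂ ψ₀ := hψ₀ φ'
      _ ≤ Vval f ρ₂ χ := by
          simp only [Vval]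
          nlinarith [mul_nonneg (by linarith : (0:ℝ) ≤ 1 - ρ₂) (sub_nonneg.mpr hs)]
  · intro hχ
    have hcχ : (χ.1.card : ℝ) = (k : ℝ) := by exact_mod_cast hall2 χ hχ
    have hcφ : (φ₀.1.card : ℝ) = (k : ℝ) := by exact_mod_cast hall1 φ₀ hφ₀
    have e1 := hχ φ₀
    simp only [Vval] at e1
    have hs : f φ₀ ≤ f χ := by nlinarith [e1]
    intro φ'
    calc Vval f ρ₁ φ' ≤ Vval f ρ₁ φ₀ := hφ₀ φ'
      _ ≤ Vval f ρ₁ χ := by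
          simp only [Vval]
          nlinarith [mul_nonneg (by linarith : (0:ℝ) ≤ 1 - ρ₁) (sub_nonneg.mpr hs)]

/-- if for each instance `x` the utility `ρ ↦ u_ρ(x)` is constant on every
subset of `[0,1]` on which the set of maximizers of `ρ·|φ| + (1 − ρ)·s_x(φ)` is constant,
then every finite set of instances pseudo-shattered by `U = {u_ρ : ρ ∈ [0,1]}` has size
`N` satisfying `2^N ≤ n²·N + 1`. -/
theorem stmt_18 {X : Type*} (n : ℕ) (hn : 2 ≤ n)
    (sx : X → Fold n → ℝ) (u : ℝ → X → ℝ)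
    (hconst : ∀ x : X, ∀ ρ₁ ∈ Set.Icc (0 : ℝ) 1, ∀ ρ₂ ∈ Set.Icc (0 : ℝ) 1,
      (∀ φ : Fold n,
        (∀ φ', Vval (sx x) ρ₁ φ' ≤ Vval (sx x) ρ₁ φ) ↔
        (∀ φ', Vval (sx x) ρ₂ φ' ≤ Vval (sx x) ρ₂ φ)) →
      u ρ₁ x = u ρ₂ x)
    (s : Finset X)
    (hshatter : ∃ z : X → ℝ, ∀ b : X → Bool, ∃ ρ ∈ Set.Icc (0 : ℝ) 1,
      ∀ x ∈ s, (z x ≤ u ρ x ↔ b x = true)) :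
    2 ^ s.card ≤ n ^ 2 * s.card + 1 := by
  classical
  obtain ⟨z, hz⟩ := hshatter
  rcases Nat.eq_zero_or_pos s.card with h0 | hpos
  · simp [h0]
  choose ρ hmem hpat using fun c : (↥s → Bool) =>
    hz (fun x => if h : x ∈ s then c ⟨x, h⟩ else false)
  have hpat' : ∀ c (x : X) (hx : x ∈ s), (z x ≤ u (ρ c) x ↔ c ⟨x, hx⟩ = true) := by
    intro c x hx
    simpa [hx] using hpat c x hx
  -- if all maximizer sets agree on s, the Boolean patterns agree
  have key : ∀ c₁ c₂ : (↥s → Bool),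
      (∀ x : X, ∀ hx : x ∈ s, MaxSet (sx x) (ρ c₁) = MaxSet (sx x) (ρ c₂)) → c₁ = c₂ := by
    intro c₁ c₂ hMM
    funext x
    have hu : u (ρ c₁) x.1 = u (ρ c₂) x.1 := by
      apply hconst x.1 _ (hmem c₁) _ (hmem c₂)
      intro φ
      exact Set.ext_iff.mp (hMM x.1 x.2) φ
    have h1 := hpat' c₁ x.1 x.2
    have h2 := hpat' c₂ x.1 x.2
    rw [hu] at h1
    have hiff : (c₁ x = true) ↔ (c₂ x = true) := h1.symm.trans h2
    cases hc1 : c₁ x <;> cases hc2 : c₂ x <;> simp_all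
  have hρinj : Function.Injective ρ := by
    intro c₁ c₂ hcc
    apply key
    intro x hx
    rw [hcc]
  set N := s.card with hN
  set T : Finset ℝ := Finset.image ρ Finset.univ with hT
  have hTcard : T.card = 2 ^ N := by
    rw [hT, Finset.card_image_of_injective _ hρinj, Finset.card_univ]
    simp [Fintype.card_fun, Fintype.card_coe]
    exact hN.symm
  have hTmem : ∀ a ∈ T, a ∈ Set.Icc (0:ℝ) 1 := by
    intro a ha
    rw [hT, Finset.mem_image] at ha
    obtain ⟨c, -, rfl⟩ := ha
    exact hmem c
  set G : ℝ → ℕ := fun r => ∑ x ∈ s, hFn (sx x) r with hG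
  have hGmono : ∀ a ∈ T, ∀ b ∈ T, a ≤ b → G a ≤ G b := by
    intro a ha b hb hab
    exact Finset.sum_le_sum fun x _ =>
      hFn_mono (sx x) (hTmem a ha).1 hab (hTmem b hb).2
  have hGstrict : ∀ a ∈ T, ∀ b ∈ T, a < b → b < 1 → G a < G b := by
    intro a ha b hb hab hb1
    rw [hT, Finset.mem_image] at ha hb
    obtain ⟨c₁, -, rfl⟩ := ha
    obtain ⟨c₂, -, rfl⟩ := hb
    have hcne : c₁ ≠ c₂ := fun h => absurd (congrArg ρ h) (ne_of_lt hab)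
    have hex : ∃ x : X, ∃ hx : x ∈ s, MaxSet (sx x) (ρ c₁) ≠ MaxSet (sx x) (ρ c₂) := by
      by_contra hc
      push_neg at hc
      exact hcne (key c₁ c₂ hc)
    obtain ⟨x₀, hx₀, hMne⟩ := hex
    apply Finset.sum_lt_sum
    · intro x hx
      exact hFn_mono (sx x) (hmem c₁).1 (le_of_lt hab) (hmem c₂).2
    · exact ⟨x₀, hx₀, hFn_strict (sx x₀) (hmem c₁).1 hab hb1 hMne⟩
  have hGle : ∀ a : ℝ, G a ≤ 2 * (n - 1) * N := by
    intro a
    calc G a ≤ ∑ _x ∈ s, 2 * (n - 1) := Finset.sum_le_sum fun x _ => hFn_le (sx x) a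
      _ = 2 * (n - 1) * N := by rw [Finset.sum_const, smul_eq_mul, hN, mul_comm]
  set B := 2 * (n - 1) * N with hB
  set T' := T.filter (fun a => a < 1) with hT'
  have hsub : T ⊆ T' ∪ {1} := by
    intro a ha
    rcases lt_or_ge a 1 with h | h
    · exact Finset.mem_union_left _ (Finset.mem_filter.mpr ⟨ha, h⟩)
    · have : a = 1 := le_antisymm (hTmem a ha).2 h
      exact Finset.mem_union_right _ (by simp [this])
  have hinjG : Set.InjOn G ↑T' := by
    intro a ha b hb hab
    rw [hT', Finset.mem_coe, Finset.mem_filter] at ha hb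
    rcases lt_trichotomy a b with h | h | h
    · exact absurd hab (ne_of_lt (hGstrict a ha.1 b hb.1 h hb.2))
    · exact h
    · exact absurd hab.symm (ne_of_lt (hGstrict b hb.1 a ha.1 h ha.2))
  have hT'card : T'.card ≤ B + 1 := by
    calc T'.card = (T'.image G).card := (Finset.card_image_of_injOn hinjG).symm
      _ ≤ (Finset.range (B + 1)).card := by
          apply Finset.card_le_card
          intro k hk
          rw [Finset.mem_image] at hk
          obtain ⟨a, -, rfl⟩ := hk
          rw [Finset.mem_range]
          exact Nat.lt_succ_of_le (hGle a)
      _ = B + 1 := Finset.card_range _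
  have hTle : T.card ≤ B + 2 := by
    calc T.card ≤ (T' ∪ {1}).card := Finset.card_le_card hsub
      _ ≤ T'.card + ({1} : Finset ℝ).card := Finset.card_union_le _ _
      _ ≤ (B + 1) + 1 := by simpa using hT'card
  have hmain : 2 ^ N ≤ B + 2 := hTcard ▸ hTle
  have hfin : B + 2 ≤ n ^ 2 * N + 1 := by
    obtain ⟨m, rfl⟩ := Nat.exists_eq_add_of_le hn
    rw [hB]
    have h1 : 1 ≤ N := hpos
    have h2 : 2 + m - 1 = m + 1 := by omega
    rw [h2]
    nlinarith [Nat.mul_le_mul_left (m * m) h1, h1]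
  omega
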